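/- Let u(n) = 108^n · ∑_{k=0}^n C(−1/3, k)·C(−1/6, k)·C(−1/3, n−k)·C(−1/6, n−k). Then for every natural number n, (n+1)³ · u(n+1) − 6(3n+2)(2n+1)(3n+1) · u(n) = 0. -/
import Mathlib


/-- Generalized binomial coefficient `C(x, k) = x(x-1)⋯(x-k+1)/k!`. -/
noncomputable def genBinom (x : ℝ) (k : ℕ) : ℝ :=
  (∏ i ∈ Finset.range k, (x - i)) / (Nat.factorial k)

noncomputable def u (n : ℕ) : ℝ :=
  108 ^ n * ∑ k ∈ Finset.range (n + 1),
    genBinom (-1/3) k * genBinom (-1/6) k *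
      genBinom (-1/3) (n - k) * genBinom (-1/6) (n - k)

/- Auxiliary development: `aSeq k = 108^k C(-1/3,k) C(-1/6,k)` satisfies a
first-order recurrence, and the recurrence for `u` follows by creative
telescoping with the certificate polynomial `Pc`. -/

noncomputable def aSeq (k : ℕ) : ℝ :=
  108 ^ k * (genBinom (-1/3) k * genBinom (-1/6) k)

lemma genBinom_succ (x : ℝ) (k : ℕ) :
    genBinom x (k + 1) = genBinom x k * (x - k) / (k + 1) := by
  unfold genBinom
  rw [Finset.prod_range_succ, Nat.factorial_succ]
  push_cast
  rw [div_mul_eq_mul_div, div_div, mul_comm ((Nat.factorial k : ℝ)) (((k:ℝ)+1))]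

lemma aSeq_zero : aSeq 0 = 1 := by
  simp [aSeq, genBinom]

lemma aSeq_succ (k : ℕ) :
    ((k : ℝ) + 1) ^ 2 * aSeq (k + 1) = 6 * (3 * k + 1) * (6 * k + 1) * aSeq k := by
  unfold aSeq
  rw [genBinom_succ, genBinom_succ]
  have h2 : ((k : ℝ) + 1) ≠ 0 := by positivity
  field_simp
  ring

/-- The Zeilberger certificate polynomial. -/
noncomputable def Pc (n k : ℕ) : ℝ :=
  6 - 42 * k + 216 * (k:ℝ) ^ 3 + 60 * n - 162 * (n:ℝ) * k - 324 * (n:ℝ) * (k:ℝ) ^ 2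
    + 162 * (n:ℝ) ^ 2 + 108 * (n:ℝ) ^ 3

noncomputable def bSeq : ℕ → ℝ
  | 0 => 0
  | (j + 1) => aSeq j

lemma u_eq (n : ℕ) : u n = ∑ k ∈ Finset.range (n + 1), aSeq k * aSeq (n - k) := by
  unfold u
  rw [Finset.mul_sum]
  apply Finset.sum_congr rfl
  intro k hk
  have hkn : k ≤ n := Nat.lt_succ_iff.mp (Finset.mem_range.mp hk)
  have : (108 : ℝ) ^ n = 108 ^ k * 108 ^ (n - k) := by
    rw [← pow_add, Nat.add_sub_cancel' hkn]
  rw [this]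
  unfold aSeq
  ring

theorem u_recurrence (n : ℕ) :
    ((n : ℝ) + 1) ^ 3 * u (n + 1)
      - 6 * (3 * n + 2) * (2 * n + 1) * (3 * n + 1) * u n = 0 := by
  rw [u_eq, u_eq]
  set C : ℝ := 6 * (3 * n + 2) * (2 * n + 1) * (3 * n + 1) with hC
  rw [Finset.sum_range_succ' (fun k => aSeq k * aSeq (n + 1 - k)) (n + 1)]
  simp only [Nat.add_sub_add_right, Nat.sub_zero]
  set H : ℕ → ℝ := fun k => Pc n k * aSeq k * bSeq (n + 1 - k) with hH
  have key : ∀ k ∈ Finset.range (n + 1),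
      ((n : ℝ) + 1) ^ 3 * (aSeq (k + 1) * aSeq (n - k)) - C * (aSeq k * aSeq (n - k))
        = H (k + 1) - H k := by
    intro k hk
    have hkn : k ≤ n := Nat.lt_succ_iff.mp (Finset.mem_range.mp hk)
    rcases eq_or_lt_of_le hkn with heq | hlt
    · -- boundary case k = n
      subst heq
      have h1 : k + 1 - (k + 1) = 0 := by omega
      have h2 : k + 1 - k = 1 := by omega
      have h3 : k - k = 0 := by omega
      simp only [hH, h1, h2, h3, bSeq, aSeq_zero]
      simp only [Pc, hC]
      push_cast
      linear_combination ((k : ℝ) + 1) * aSeq_succ k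
    · -- generic case k < n : write n = k + m + 1
      obtain ⟨m, hm⟩ : ∃ m, n = k + m + 1 := ⟨n - k - 1, by omega⟩
      subst hm
      have e1 : k + m + 1 - k = m + 1 := by omega
      have e2 : k + m + 1 + 1 - (k + 1) = m + 1 := by omega
      have e3 : k + m + 1 + 1 - k = m + 2 := by omega
      simp only [hH, e1, e2, e3, bSeq]
      have hak := aSeq_succ k
      have ham := aSeq_succ m
      have hk2 : ((k : ℝ) + 1) ^ 2 ≠ 0 := by positivity
      have hm2 : ((m : ℝ) + 1) ^ 2 ≠ 0 := by positivity
      have hak' : aSeq (k + 1) = 6 * (3 * k + 1) * (6 * k + 1) * aSeq k / ((k : ℝ) + 1) ^ 2 := by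
        field_simp
        linarith [hak]
      have ham' : aSeq (m + 1) = 6 * (3 * m + 1) * (6 * m + 1) * aSeq m / ((m : ℝ) + 1) ^ 2 := by
        field_simp
        linarith [ham]
      rw [hak', ham']
      simp only [Pc, hC]
      push_cast
      field_simp
      ring
  have hsum : ((n : ℝ) + 1) ^ 3 * (∑ k ∈ Finset.range (n + 1), aSeq (k + 1) * aSeq (n - k))
      - C * (∑ k ∈ Finset.range (n + 1), aSeq k * aSeq (n - k)) = H (n + 1) - H 0 := by
    rw [← Finset.sum_range_sub H (n + 1), Finset.mul_sum, Finset.mul_sum,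
      ← Finset.sum_sub_distrib]
    exact Finset.sum_congr rfl key
  have hH0 : H 0 = Pc n 0 * aSeq n := by
    simp only [hH, Nat.sub_zero, bSeq, aSeq_zero]
    ring
  have hHn1 : H (n + 1) = 0 := by
    simp only [hH]
    have h0 : n + 1 - (n + 1) = 0 := by omega
    rw [h0]
    simp [bSeq]
  rw [hHn1, hH0] at hsum
  have hfin : ((n : ℝ) + 1) ^ 3 * aSeq (n + 1) = Pc n 0 * aSeq n := by
    simp only [Pc]
    push_cast
    linear_combination ((n : ℝ) + 1) * aSeq_succ n
  rw [aSeq_zero]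
  linear_combination hsum + hfin
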